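/- There exists a constant C > 1, depending only on the dimension of E, such that for every pair of subspaces U, V ⊆ E with dim U ≤ dim V and U ∩ V⊥ = 0, with slope M : U → U⊥ (the unique linear map with P_V(U) = { u + M u : u ∈ U }), one has (1/C) ‖M‖ (1 + ‖M‖²)^{−1/2} ≤ δ(U,V) ≤ C ‖M‖ (1 + ‖M‖²)^{−1/2}. -/

import Mathlib

open Module Submodule

noncomputable section

variable {E : Type*} [NormedAddCommGroup E] [InnerProductSpace ℝ E] [FiniteDimensional ℝ E]

/-- The orthogonal projection onto a subspace `U`, viewed as a continuous linear
endomorphism of `E`. -/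
noncomputable def projCLM (U : Submodule ℝ E) : E →L[ℝ] E :=
  U.subtypeL.comp (orthogonalProjection U)

/-- The gap `δ(U,V) := ‖P_U - P_V ∘ P_U‖` between two subspaces. -/
noncomputable def gap (U V : Submodule ℝ E) : ℝ :=
  ‖projCLM U - (projCLM V).comp (projCLM U)‖

lemma projCLM_apply (U : Submodule ℝ E) (x : E) :
    projCLM U x = (orthogonalProjection U x : E) := rfl

lemma projCLM_mem (U : Submodule ℝ E) (x : E) : projCLM U x ∈ U := (orthogonalProjection U x).2

lemma projCLM_of_mem (U : Submodule ℝ E) {x : E} (hx : x ∈ U) : projCLM U x = x := by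
  rw [projCLM_apply]
  exact starProjection_eq_self_iff.mpr hx

-- upper bound : gap U V ≤ 2‖M‖/(1+‖M‖)
lemma gap_upper (U V : Submodule ℝ E) (M : ↥U →L[ℝ] ↥Uᗮ)
    (h : Submodule.map (projCLM V : E →ₗ[ℝ] E) U = LinearMap.range ((U.subtypeL + Uᗮ.subtypeL.comp M : ↥U →L[ℝ] E) : ↥U →ₗ[ℝ] E)) :
    gap U V ≤ 2 * ‖M‖ / (1 + ‖M‖) := by
  set a := ‖M‖ with ha
  have ha0 : 0 ≤ a := ha ▸ norm_nonneg M
  have hE : (0:ℝ) ≤ 2 * a / (1 + a) := by positivity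
  refine ContinuousLinearMap.opNorm_le_bound _ hE fun x => ?_
  set u : ↥U := orthogonalProjection U x with hu
  have hux : ‖(u : E)‖ ≤ ‖x‖ := by
    calc ‖(u : E)‖ = ‖u‖ := rfl
    _ ≤ ‖orthogonalProjection U‖ * ‖x‖ := (orthogonalProjection U).le_opNorm x
    _ ≤ 1 * ‖x‖ := by
        exact mul_le_mul_of_nonneg_right (orthogonalProjection_norm_le U) (norm_nonneg _)
    _ = ‖x‖ := one_mul _
  -- the test vector
  set c : ℝ := 1 / (1 + a) with hc
  have hc0 : 0 ≤ c := by positivity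
  have hc1 : c ≤ 1 := by
    rw [hc, div_le_one (by linarith)]; linarith
  have hmemV : (u : E) + ((M u : ↥Uᗮ) : E) ∈ V := by
    have h1 : (u : E) + ((M u : ↥Uᗮ) : E) ∈ LinearMap.range ((U.subtypeL + Uᗮ.subtypeL.comp M : ↥U →L[ℝ] E) : ↥U →ₗ[ℝ] E) :=
      ⟨u, rfl⟩
    rw [← h] at h1
    obtain ⟨y, -, hy⟩ := h1
    rw [← hy]; exact projCLM_mem V y
  have hv : c • ((u : E) + ((M u : ↥Uᗮ) : E)) ∈ V := V.smul_mem c hmemV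
  -- distance bound
  have hmin : ‖(u : E) - projCLM V (u : E)‖ ≤ ‖(u : E) - c • ((u : E) + ((M u : ↥Uᗮ) : E))‖ := by
    rw [show projCLM V (u : E) = V.starProjection (u : E) from rfl, starProjection_minimal]
    exact ciInf_le ⟨0, fun r ⟨i, hi⟩ => hi ▸ norm_nonneg _⟩
      (⟨_, hv⟩ : V)
  have hrw : (u : E) - c • ((u : E) + ((M u : ↥Uᗮ) : E))
      = (1 - c) • (u : E) - c • ((M u : ↥Uᗮ) : E) := by module
  have hMu : ‖((M u : ↥Uᗮ) : E)‖ ≤ a * ‖(u : E)‖ := by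
    calc ‖((M u : ↥Uᗮ) : E)‖ = ‖M u‖ := rfl
    _ ≤ a * ‖u‖ := M.le_opNorm u
    _ = a * ‖(u : E)‖ := rfl
  have key : ‖(u : E) - projCLM V (u : E)‖ ≤ (2 * a / (1 + a)) * ‖(u : E)‖ := by
    calc ‖(u : E) - projCLM V (u : E)‖
        ≤ ‖(u : E) - c • ((u : E) + ((M u : ↥Uᗮ) : E))‖ := hmin
      _ = ‖(1 - c) • (u : E) - c • ((M u : ↥Uᗮ) : E)‖ := by rw [hrw]
      _ ≤ ‖(1 - c) • (u : E)‖ + ‖c • ((M u : ↥Uᗮ) : E)‖ := norm_sub_le _ _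
      _ = (1 - c) * ‖(u : E)‖ + c * ‖((M u : ↥Uᗮ) : E)‖ := by
          rw [norm_smul, norm_smul, Real.norm_eq_abs, Real.norm_eq_abs,
            abs_of_nonneg (by linarith), abs_of_nonneg hc0]
      _ ≤ (1 - c) * ‖(u : E)‖ + c * (a * ‖(u : E)‖) := by
          have := mul_le_mul_of_nonneg_left hMu hc0
          linarith
      _ = ((1 - c) + c * a) * ‖(u : E)‖ := by ring
      _ = (2 * a / (1 + a)) * ‖(u : E)‖ := by
          congr 1
          rw [hc]
          field_simp
          ring
  calc ‖(projCLM U - (projCLM V).comp (projCLM U)) x‖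
      = ‖(u : E) - projCLM V (u : E)‖ := by
        simp only [ContinuousLinearMap.sub_apply, ContinuousLinearMap.comp_apply]
        rfl
    _ ≤ (2 * a / (1 + a)) * ‖(u : E)‖ := key
    _ ≤ (2 * a / (1 + a)) * ‖x‖ := mul_le_mul_of_nonneg_left hux hE

-- lower bound : ‖M‖ ≤ (1+‖M‖) * gap U V
lemma slope_le (U V : Submodule ℝ E) (M : ↥U →L[ℝ] ↥Uᗮ)
    (h : Submodule.map (projCLM V : E →ₗ[ℝ] E) U = LinearMap.range ((U.subtypeL + Uᗮ.subtypeL.comp M : ↥U →L[ℝ] E) : ↥U →ₗ[ℝ] E)) :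
    ‖M‖ ≤ (1 + ‖M‖) * gap U V := by
  have hg0 : 0 ≤ gap U V := norm_nonneg _
  have ha0 : 0 ≤ ‖M‖ := norm_nonneg M
  refine ContinuousLinearMap.opNorm_le_bound _ (by positivity) fun u => ?_
  have hmem : projCLM V (u : E) ∈ LinearMap.range ((U.subtypeL + Uᗮ.subtypeL.comp M : ↥U →L[ℝ] E) : ↥U →ₗ[ℝ] E) := by
    rw [← h]; exact ⟨u, u.2, rfl⟩
  obtain ⟨w, hw⟩ := hmem
  have hw' : ((w : E) + ((M w : ↥Uᗮ) : E)) = projCLM V (u : E) := hw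
  set d := ‖(u : E) - projCLM V (u : E)‖ with hd
  have hd0 : 0 ≤ d := hd ▸ norm_nonneg _
  have hdg : d ≤ gap U V * ‖u‖ := by
    have heq : (u : E) - projCLM V (u : E)
        = (projCLM U - (projCLM V).comp (projCLM U)) (u : E) := by
      simp only [ContinuousLinearMap.sub_apply, ContinuousLinearMap.comp_apply,
        projCLM_of_mem U u.2]
    calc d = ‖(projCLM U - (projCLM V).comp (projCLM U)) (u : E)‖ := by rw [hd, heq]
      _ ≤ gap U V * ‖(u : E)‖ := ContinuousLinearMap.le_opNorm _ _
      _ = gap U V * ‖u‖ := rfl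
  have hdec : (u : E) - projCLM V (u : E) = ((u - w : ↥U) : E) - ((M w : ↥Uᗮ) : E) := by
    rw [← hw']
    push_cast
    abel
  have hinner : inner ℝ (((u - w : ↥U) : E)) (((M w : ↥Uᗮ) : E)) = (0 : ℝ) :=
    (M w).2 _ (u - w).2
  have hpyth : d ^ 2 = ‖((u - w : ↥U) : E)‖ ^ 2 + ‖((M w : ↥Uᗮ) : E)‖ ^ 2 := by
    rw [hd, hdec, @norm_sub_sq_real, hinner]; ring
  have h1 : ‖((u - w : ↥U) : E)‖ ≤ d := by
    nlinarith [norm_nonneg (((u - w : ↥U) : E)), norm_nonneg (((M w : ↥Uᗮ) : E))]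
  have h2 : ‖((M w : ↥Uᗮ) : E)‖ ≤ d := by
    nlinarith [norm_nonneg (((u - w : ↥U) : E)), norm_nonneg (((M w : ↥Uᗮ) : E))]
  have h3 : ‖M u‖ ≤ ‖M (u - w)‖ + ‖M w‖ := by
    calc ‖M u‖ = ‖M (u - w) + M w‖ := by rw [← map_add, sub_add_cancel]
      _ ≤ ‖M (u - w)‖ + ‖M w‖ := norm_add_le _ _
  have h4 : ‖M (u - w)‖ ≤ ‖M‖ * d := by
    calc ‖M (u - w)‖ ≤ ‖M‖ * ‖u - w‖ := M.le_opNorm _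
      _ = ‖M‖ * ‖((u - w : ↥U) : E)‖ := rfl
      _ ≤ ‖M‖ * d := mul_le_mul_of_nonneg_left h1 ha0
  have h5 : ‖M w‖ ≤ d := h2
  have h6 : ‖M u‖ ≤ (1 + ‖M‖) * d := by linarith
  calc ‖M u‖ ≤ (1 + ‖M‖) * d := h6
    _ ≤ (1 + ‖M‖) * (gap U V * ‖u‖) := by
        exact mul_le_mul_of_nonneg_left hdg (by linarith)
    _ = (1 + ‖M‖) * gap U V * ‖u‖ := by ring

/-- There exists a constant `C > 1`, depending only on `dim E`, such that for every pair of
subspaces `U, V ⊆ E` with `dim U ≤ dim V` and `U ∩ V⊥ = 0`, with slope `M : U → U⊥`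
(the unique linear map with `P_V(U) = {u + Mu : u ∈ U}`),
`(1/C) ‖M‖ (1+‖M‖²)^{-1/2} ≤ δ(U,V) ≤ C ‖M‖ (1+‖M‖²)^{-1/2}`. -/
theorem gap_comparable_slope (n : ℕ) :
    ∃ C : ℝ, 1 < C ∧
      ∀ (E : Type*) [NormedAddCommGroup E] [InnerProductSpace ℝ E] [FiniteDimensional ℝ E],
        finrank ℝ E = n →
        ∀ (U V : Submodule ℝ E) (M : ↥U →L[ℝ] ↥Uᗮ),
          finrank ℝ U ≤ finrank ℝ V → U ⊓ Vᗮ = ⊥ →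
          Submodule.map (projCLM V : E →ₗ[ℝ] E) U = LinearMap.range ((U.subtypeL + Uᗮ.subtypeL.comp M : ↥U →L[ℝ] E) : ↥U →ₗ[ℝ] E) →
          (1 / C) * (‖M‖ / Real.sqrt (1 + ‖M‖ ^ 2)) ≤ gap U V ∧
            gap U V ≤ C * (‖M‖ / Real.sqrt (1 + ‖M‖ ^ 2)) := by
  refine ⟨2, one_lt_two, fun E _ _ _ _ U V M _ _ h => ?_⟩
  have hub := gap_upper U V M h
  have hlb := slope_le U V M h
  set a := ‖M‖ with ha
  have ha0 : 0 ≤ a := ha ▸ norm_nonneg M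
  set s := Real.sqrt (1 + a ^ 2) with hs
  have hs0 : 0 < s := hs ▸ Real.sqrt_pos.mpr (by positivity)
  have hs1 : s ≤ 1 + a := by
    rw [hs]
    calc Real.sqrt (1 + a ^ 2) ≤ Real.sqrt ((1 + a) ^ 2) :=
          Real.sqrt_le_sqrt (by nlinarith)
      _ = 1 + a := Real.sqrt_sq (by linarith)
  have hs2 : 1 + a ≤ 2 * s := by
    rw [hs, show (2 : ℝ) * Real.sqrt (1 + a ^ 2)
        = Real.sqrt (2 ^ 2 * (1 + a ^ 2)) by
          rw [Real.sqrt_mul (by norm_num), Real.sqrt_sq (by norm_num)]]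
    refine (Real.le_sqrt (by linarith) (by positivity)).mpr ?_
    nlinarith
  have hg0 : 0 ≤ gap U V := norm_nonneg _
  constructor
  · rw [show (1 / 2 : ℝ) * (a / s) = a / (2 * s) by ring,
      div_le_iff₀ (by positivity)]
    have := mul_le_mul_of_nonneg_right hs2 hg0
    nlinarith
  · rw [show (2 : ℝ) * (a / s) = 2 * a / s by ring, le_div_iff₀ hs0]
    have hub' : gap U V * (1 + a) ≤ 2 * a := by
      rw [← le_div_iff₀ (by linarith)]; exact hub
    have := mul_le_mul_of_nonneg_left hs1 hg0
    nlinarith
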